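/- For every pair u, v ∈ V there exist natural numbers r, s, and m such that f^r(u) = f^s(v) = (m,1,1,0). In other words, any two elements of V eventually merge under iteration of f at a tuple of the form (m,1,1,0). -/

import Mathlib

/-- Conditions I-III defining the set V of 4-tuples (a,b,c,d). -/
def inV : ℕ × ℕ × ℕ × ℕ → Prop :=
  fun ⟨a, b, c, d⟩ =>
    (∃ k, c = 2 ^ k) ∧ (d = 0 ∨ d = 1) ∧ (a > 0 → b = 0 → c > 1) ∧ (a = 0 → c = 1)

open Classical in
/-- The function f defined by the six rules. -/
noncomputable def f : ℕ × ℕ × ℕ × ℕ → ℕ × ℕ × ℕ × ℕ :=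
  fun ⟨a, b, c, d⟩ =>
    if d = 0 then
      if a > 0 then
        if b > 0 then (a, b - 1, 2 * c, 0)
        else (a - 1, c, 1, 0)
      else (0, b + 1, 1, 1)
    else
      if c > 1 then (a, b + 1, c / 2, 1)
      else if ∃ k > 0, b = 2 ^ k then (a + 1, 0, b, 1)
      else (a, b, 1, 0)

/- ### Rule lemmas -/

lemma f_rule1 (a b c : ℕ) (ha : 0 < a) (hb : 0 < b) :
    f (a, b, c, 0) = (a, b - 1, 2 * c, 0) := by
  simp [f, ha, hb]

lemma f_rule2 (a c : ℕ) (ha : 0 < a) : f (a, 0, c, 0) = (a - 1, c, 1, 0) := by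
  simp [f, ha]

lemma f_rule3 (b c : ℕ) : f (0, b, c, 0) = (0, b + 1, 1, 1) := by
  simp [f]

lemma f_rule4 (a b c : ℕ) (hc : 1 < c) : f (a, b, c, 1) = (a, b + 1, c / 2, 1) := by
  simp [f, hc]

lemma f_rule5 (a k : ℕ) (hk : 0 < k) : f (a, 2 ^ k, 1, 1) = (a + 1, 0, 2 ^ k, 1) := by
  have : ∃ j > 0, (2:ℕ) ^ k = 2 ^ j := ⟨k, hk, rfl⟩
  simp [f, this]
  exact hk.ne'

lemma f_rule6 (a b : ℕ) (hb : ¬∃ k > 0, b = 2 ^ k) : f (a, b, 1, 1) = (a, b, 1, 0) := by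
  simp [f, hb]

lemma not_pow_one : ¬∃ k > 0, (1:ℕ) = 2 ^ k := by
  rintro ⟨k, hk, h⟩
  have : 1 < 2 ^ k := Nat.one_lt_two_pow_iff.mpr hk.ne'
  omega

lemma not_pow_zero : ¬∃ k > 0, (0:ℕ) = 2 ^ k := by
  rintro ⟨k, _, h⟩
  have : 0 < 2 ^ k := Nat.two_pow_pos k
  omega

/- ### Iteration lemmas -/

/-- Iterating rule 4: halving c while incrementing b. -/
lemma iter_rule4 (k : ℕ) : ∀ a b : ℕ, f^[k] (a, b, 2 ^ k, 1) = (a, b + k, 1, 1) := by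
  induction k with
  | zero => intro a b; simp
  | succ k ih =>
      intro a b
      rw [Function.iterate_succ_apply]
      have h1 : (1:ℕ) < 2 ^ (k + 1) := Nat.one_lt_two_pow_iff.mpr (Nat.succ_ne_zero k)
      have h2 : (2:ℕ) ^ (k + 1) / 2 = 2 ^ k := by
        rw [pow_succ, Nat.mul_div_cancel _ (by norm_num)]
      rw [f_rule4 _ _ _ h1, h2, ih]
      ring_nf

/-- Iterating rule 1: decrementing b while doubling c. -/
lemma iter_rule1 (b : ℕ) : ∀ a c : ℕ, 0 < a →
    f^[b] (a, b, c, 0) = (a, 0, 2 ^ b * c, 0) := by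
  induction b with
  | zero => intro a c _; simp
  | succ b ih =>
      intro a c ha
      rw [Function.iterate_succ_apply, f_rule1 _ _ _ ha (Nat.succ_pos b)]
      simp only [Nat.succ_sub_one]
      rw [ih _ _ ha]
      ring_nf

/-- Tower function: tw a b = 2^(2^(...^b)) with a exponentiations. -/
def tw : ℕ → ℕ → ℕ
  | 0, b => b
  | (a+1), b => tw a (2 ^ b)

lemma tw_ge (a : ℕ) : ∀ b : ℕ, b ≤ tw a b := by
  induction a with
  | zero => intro b; simp [tw]
  | succ a ih =>
      intro b
      calc b ≤ 2 ^ b := Nat.le_of_lt (Nat.lt_two_pow_self (n := b))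
        _ ≤ tw a (2 ^ b) := ih _
        _ = tw (a+1) b := rfl

/-- Descent: from (a, b, 1, 0) with b ≥ 1 we reach (0, tw a b, 1, 0). -/
lemma descent (a : ℕ) : ∀ b : ℕ, 1 ≤ b → ∃ t, f^[t] (a, b, 1, 0) = (0, tw a b, 1, 0) := by
  induction a with
  | zero => intro b _; exact ⟨0, rfl⟩
  | succ a ih =>
      intro b hb
      obtain ⟨t, ht⟩ := ih (2 ^ b) (Nat.one_le_two_pow)
      refine ⟨t + (1 + b), ?_⟩
      rw [Function.iterate_add_apply, Function.iterate_add_apply,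
        iter_rule1 _ _ _ (Nat.succ_pos a)]
      rw [Function.iterate_one, f_rule2 _ _ (Nat.succ_pos a)]
      simpa [tw] using ht

/-- From (a, b, 1, 1) with b ≥ 1 we reach (0, tw a b, 1, 0). -/
lemma fromD1 : ∀ b : ℕ, 1 ≤ b → ∀ a, ∃ t, f^[t] (a, b, 1, 1) = (0, tw a b, 1, 0) := by
  intro b
  induction b using Nat.strong_induction_on with
  | _ b ih =>
      intro hb a
      by_cases h : ∃ k > 0, b = 2 ^ k
      · obtain ⟨k, hk, rfl⟩ := h
        have hkb : k < 2 ^ k := Nat.lt_two_pow_self (n := k)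
        obtain ⟨t, ht⟩ := ih k hkb hk (a + 1)
        refine ⟨t + (k + 1), ?_⟩
        rw [Function.iterate_add_apply, Function.iterate_add_apply,
          Function.iterate_one, f_rule5 _ _ hk, iter_rule4]
        simp only [Nat.zero_add]
        rw [ht]
        rfl
      · obtain ⟨t, ht⟩ := descent a b hb
        refine ⟨t + 1, ?_⟩
        rw [Function.iterate_add_apply, Function.iterate_one, f_rule6 _ _ h, ht]

/-- Chain step: from (0, B, 1, 0) we reach (0, B+1, 1, 0). -/
lemma chain_step (B : ℕ) : ∃ t, f^[t] (0, B, 1, 0) = (0, B + 1, 1, 0) := by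
  obtain ⟨t, ht⟩ := fromD1 (B + 1) (Nat.succ_le_succ (Nat.zero_le B)) 0
  refine ⟨t + 1, ?_⟩
  rw [Function.iterate_add_apply, Function.iterate_one, f_rule3]
  simpa [tw] using ht

/-- Chain: from (0, B, 1, 0) we reach (0, B', 1, 0) for any B' ≥ B. -/
lemma chain (B B' : ℕ) (h : B ≤ B') : ∃ t, f^[t] (0, B, 1, 0) = (0, B', 1, 0) := by
  induction B' with
  | zero => exact ⟨0, by simp [Nat.le_zero.mp h]⟩
  | succ B' ih =>
      rcases Nat.lt_or_ge B (B' + 1) with hlt | hge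
      · obtain ⟨t1, ht1⟩ := ih (Nat.lt_succ_iff.mp hlt)
        obtain ⟨t2, ht2⟩ := chain_step B'
        exact ⟨t2 + t1, by rw [Function.iterate_add_apply, ht1, ht2]⟩
      · have : B = B' + 1 := le_antisymm h hge
        exact ⟨0, by simp [this]⟩

/-- Tower sequence T 0 = 2, T (m+1) = 2 ^ T m. -/
def Tw : ℕ → ℕ
  | 0 => 2
  | (m+1) => 2 ^ Tw m

lemma Tw_ge (m : ℕ) : m + 2 ≤ Tw m := by
  induction m with
  | zero => simp [Tw]
  | succ m ih =>
      have : Tw m < 2 ^ Tw m := Nat.lt_two_pow_self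
      simpa [Tw] using by omega

/-- From (a, Tw m, 1, 1) we reach the merge state (a + m + 1, 1, 1, 0). -/
lemma toMerge (m : ℕ) : ∀ a, ∃ t, f^[t] (a, Tw m, 1, 1) = (a + m + 1, 1, 1, 0) := by
  induction m with
  | zero =>
      intro a
      refine ⟨3, ?_⟩
      show f (f (f (a, Tw 0, 1, 1))) = _
      rw [show (Tw 0) = 2 ^ 1 from rfl, f_rule5 _ _ Nat.one_pos,
        show ((2:ℕ)^1) = 2 from rfl, f_rule4 _ _ _ one_lt_two,
        show (2:ℕ)/2 = 1 from rfl, show (0:ℕ)+1 = 1 from rfl,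
        f_rule6 _ _ not_pow_one]
  | succ m ih =>
      intro a
      obtain ⟨t, ht⟩ := ih (a + 1)
      have hT : 0 < Tw m := by have := Tw_ge m; omega
      refine ⟨t + (Tw m + 1), ?_⟩
      rw [Function.iterate_add_apply, Function.iterate_add_apply,
        Function.iterate_one, show Tw (m+1) = 2 ^ Tw m from rfl,
        f_rule5 _ _ hT, iter_rule4]
      simp only [Nat.zero_add]
      rw [ht]
      ring_nf

/-- Every element of V reaches some state (0, B, 1, 0) with B ≥ 1. -/
lemma reach_chain (u : ℕ × ℕ × ℕ × ℕ) (hu : inV u) :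
    ∃ r B, 1 ≤ B ∧ f^[r] u = (0, B, 1, 0) := by
  obtain ⟨a, b, c, d⟩ := u
  obtain ⟨⟨e, hc⟩, hd, h2, h3⟩ := hu
  rcases hd with hd | hd
  · subst hd
    rcases Nat.eq_zero_or_pos a with ha | ha
    · subst ha
      have hc1 : c = 1 := h3 rfl
      subst hc1
      rcases Nat.eq_zero_or_pos b with hb | hb
      · subst hb
        refine ⟨2, 1, le_refl 1, ?_⟩
        show f (f (0, 0, 1, 0)) = _
        rw [f_rule3, f_rule6 _ _ not_pow_one]
      · exact ⟨0, b, hb, rfl⟩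
    · -- a > 0, d = 0
      have hpos : 1 ≤ 2 ^ b * c := by
        have : 0 < c := by rw [hc]; positivity
        have : 0 < 2 ^ b * c := Nat.mul_pos (by positivity) this
        omega
      obtain ⟨t, ht⟩ := descent (a - 1) (2 ^ b * c) hpos
      refine ⟨t + (1 + b), tw (a - 1) (2 ^ b * c), le_trans hpos (tw_ge _ _), ?_⟩
      rw [Function.iterate_add_apply, Function.iterate_add_apply,
        iter_rule1 _ _ _ ha, Function.iterate_one, f_rule2 _ _ ha, ht]
  · subst hd
    rcases Nat.lt_or_ge 1 c with hc1 | hc1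
    · -- c > 1, d = 1
      have he : c = 2 ^ e := hc
      subst he
      have he1 : 1 ≤ e := by
        rcases Nat.eq_zero_or_pos e with he0 | he0
        · simp [he0] at hc1
        · exact he0
      obtain ⟨t, ht⟩ := fromD1 (b + e) (by omega) a
      refine ⟨t + e, tw a (b + e), le_trans (by omega) (tw_ge _ _), ?_⟩
      rw [Function.iterate_add_apply, iter_rule4, ht]
    · -- c = 1
      have hc1' : c = 1 := by
        have : 0 < c := by rw [hc]; positivity
        omega
      subst hc1'
      rcases Nat.eq_zero_or_pos b with hb | hb
      · subst hb
        rcases Nat.eq_zero_or_pos a with ha | ha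
        · subst ha
          refine ⟨3, 1, le_refl 1, ?_⟩
          show f (f (f (0, 0, 1, 1))) = _
          rw [f_rule6 _ _ not_pow_zero, f_rule3, f_rule6 _ _ not_pow_one]
        · exact absurd (h2 ha rfl) (by omega)
      · obtain ⟨t, ht⟩ := fromD1 b hb a
        exact ⟨t, tw a b, le_trans hb (tw_ge _ _), ht⟩

theorem stmt_7 : ∀ u v : ℕ × ℕ × ℕ × ℕ, inV u → inV v →
    ∃ r s m : ℕ, f^[r] u = (m, 1, 1, 0) ∧ f^[s] v = (m, 1, 1, 0) := by
  intro u v hu hv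
  obtain ⟨ru, Bu, hBu, hru⟩ := reach_chain u hu
  obtain ⟨rv, Bv, hBv, hrv⟩ := reach_chain v hv
  set B := max Bu Bv with hB
  -- from (0, B, 1, 0) reach merge state (B + 1, 1, 1, 0)
  have key : ∃ t, f^[t] (0, B, 1, 0) = (B + 1, 1, 1, 0) := by
    have hTB : B ≤ Tw B - 1 := by have := Tw_ge B; omega
    obtain ⟨t1, ht1⟩ := chain B (Tw B - 1) hTB
    obtain ⟨t2, ht2⟩ := toMerge B 0
    simp only [Nat.zero_add] at ht2
    refine ⟨t2 + (1 + t1), ?_⟩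
    rw [Function.iterate_add_apply, Function.iterate_add_apply, ht1,
      Function.iterate_one, f_rule3, show Tw B - 1 + 1 = Tw B by have := Tw_ge B; omega,
      ht2]
  obtain ⟨t, ht⟩ := key
  obtain ⟨tu, htu⟩ := chain Bu B (le_max_left _ _)
  obtain ⟨tv, htv⟩ := chain Bv B (le_max_right _ _)
  refine ⟨t + (tu + ru), t + (tv + rv), B + 1, ?_, ?_⟩
  · rw [Function.iterate_add_apply, Function.iterate_add_apply, hru, htu, ht]
  · rw [Function.iterate_add_apply, Function.iterate_add_apply, hrv, htv, ht]
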